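/- Let k, p ≥ 1, let V : ℂ → Matrix(k×p, ℂ) be differentiable at z₀ ∈ ℂ, let A be a constant p×k complex matrix with V(z₀)A invertible, and let G be a constant row vector in ℂ^k. Define the row-vector-valued function u(z) := G (V(z)A)⁻¹ V(z) ∈ ℂ^p on the neighborhood of z₀ where V(z)A is invertible. Then u is differentiable at z₀ and u'(z₀) · A (V(z₀)A)⁻¹ = 0 (the zero row vector in ℂ^k). (Taking A = V(z₀)* and G = F(z₀)*, so that A(V(z₀)A)⁻¹ = V(z₀)† and u = W*, this is the Wirtinger ∂/∂z form of the paper's identity (∂W*/∂z_i) V† = 0, where conjugated quantities are held constant under ∂/∂z.) -/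

import Mathlib

open Matrix

noncomputable section

private lemma det_diffAt {n : ℕ} {z₀ : ℂ} {N : ℂ → Matrix (Fin n) (Fin n) ℂ}
    (hN : ∀ i j, DifferentiableAt ℂ (fun z => N z i j) z₀) :
    DifferentiableAt ℂ (fun z => (N z).det) z₀ := by
  have : (fun z => (N z).det)
      = fun z => ∑ σ : Equiv.Perm (Fin n),
          (Equiv.Perm.sign σ : ℂ) * ∏ i, N z (σ i) i := by
    funext z; rw [Matrix.det_apply]; simp [Units.smul_def]
  rw [this]
  exact DifferentiableAt.fun_sum fun σ _ =>
    (differentiableAt_const _).mul (DifferentiableAt.fun_finsetProd fun i _ => hN (σ i) i)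

/-- for `u(z) := G (V(z)A)⁻¹ V(z)` (a row vector, with `A`, `G` constant and
`V(z₀)A` invertible), `u` is differentiable at `z₀` (entrywise) and
`u'(z₀) · A (V(z₀)A)⁻¹ = 0`. Taking `A = V(z₀)*` and `G = F(z₀)*`, this is the Wirtinger
`∂/∂z` form of the identity `(∂W*/∂z) V† = 0`. -/
theorem stmt15 {k p : ℕ} (hk : 1 ≤ k) (hp : 1 ≤ p) (z₀ : ℂ)
    (V : ℂ → Matrix (Fin k) (Fin p) ℂ) (V' : Matrix (Fin k) (Fin p) ℂ)
    (hV : ∀ i j, HasDerivAt (fun z => V z i j) (V' i j) z₀)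
    (A : Matrix (Fin p) (Fin k) ℂ) (hA : IsUnit (V z₀ * A).det)
    (G : Fin k → ℂ) :
    ∃ u' : Fin p → ℂ,
      (∀ t : Fin p, HasDerivAt (fun z => (G ᵥ* ((V z * A)⁻¹ * V z)) t) (u' t) z₀) ∧
      u' ᵥ* (A * (V z₀ * A)⁻¹) = 0 := by
  set M : ℂ → Matrix (Fin k) (Fin k) ℂ := fun z => V z * A with hM
  -- entries of M differentiable
  have hVd : ∀ i j, DifferentiableAt ℂ (fun z => V z i j) z₀ :=
    fun i j => (hV i j).differentiableAt
  have hMd : ∀ i j, DifferentiableAt ℂ (fun z => M z i j) z₀ := by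
    intro i j
    have : (fun z => M z i j) = fun z => ∑ l, V z i l * A l j := by
      funext z; simp [hM, Matrix.mul_apply]
    rw [this]
    exact DifferentiableAt.fun_sum fun l _ => (hVd i l).mul (differentiableAt_const _)
  have hdet : DifferentiableAt ℂ (fun z => (M z).det) z₀ := det_diffAt hMd
  have hdet0 : (M z₀).det ≠ 0 := by
    simpa [isUnit_iff_ne_zero] using hA
  -- adjugate entries differentiable
  have hadj : ∀ i j, DifferentiableAt ℂ (fun z => (M z).adjugate i j) z₀ := by
    intro i j
    have : (fun z => (M z).adjugate i j)
        = fun z => ((M z).updateRow j (Pi.single i 1)).det := by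
      funext z; rw [Matrix.adjugate_apply]
    rw [this]
    refine det_diffAt fun a b => ?_
    by_cases h : a = j
    · simp [h, Matrix.updateRow_apply]
    · simp only [Matrix.updateRow_apply, if_neg h]
      exact hMd a b
  -- inverse entries differentiable
  have hinv : ∀ i j, DifferentiableAt ℂ (fun z => (M z)⁻¹ i j) z₀ := by
    intro i j
    have : (fun z => (M z)⁻¹ i j)
        = fun z => ((M z).det)⁻¹ * (M z).adjugate i j := by
      funext z
      rw [Matrix.inv_def]
      simp [Ring.inverse_eq_inv']
    rw [this]
    exact (hdet.inv hdet0).mul (hadj i j)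
  -- entries of u differentiable
  have hu : ∀ t, DifferentiableAt ℂ (fun z => (G ᵥ* ((M z)⁻¹ * V z)) t) z₀ := by
    intro t
    have : (fun z => (G ᵥ* ((M z)⁻¹ * V z)) t)
        = fun z => ∑ s, (∑ i, G i * (M z)⁻¹ i s) * V z s t := by
      funext z
      simp [Matrix.vecMul, Matrix.mul_apply, dotProduct, Finset.sum_mul, Finset.mul_sum]
      rw [Finset.sum_comm]
      congr 1; funext s; congr 1; funext i; ring
    rw [this]
    exact DifferentiableAt.fun_sum fun s _ =>
      (DifferentiableAt.fun_sum fun i _ => (differentiableAt_const _).mul (hinv i s)).mul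
        (hVd s t)
  refine ⟨fun t => deriv (fun z => (G ᵥ* ((M z)⁻¹ * V z)) t) z₀, fun t => (hu t).hasDerivAt, ?_⟩
  -- the key identity
  set u' : Fin p → ℂ := fun t => deriv (fun z => (G ᵥ* ((M z)⁻¹ * V z)) t) z₀ with hu'
  have key : u' ᵥ* A = 0 := by
    funext j
    -- z ↦ (G ᵥ* ((M z)⁻¹ * V z)) ᵥ* A at j is eventually constant G j
    have hev : ∀ᶠ z in nhds z₀, (M z).det ≠ 0 :=
      (hdet.continuousAt).eventually_ne hdet0
    have hconst : ∀ᶠ z in nhds z₀,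
        (∑ t, (G ᵥ* ((M z)⁻¹ * V z)) t * A t j) = G j := by
      filter_upwards [hev] with z hz
      have : (∑ t, (G ᵥ* ((M z)⁻¹ * V z)) t * A t j)
          = (G ᵥ* ((M z)⁻¹ * V z) ᵥ* A) j := by
        simp [Matrix.vecMul, dotProduct]
      rw [this, Matrix.vecMul_vecMul, Matrix.mul_assoc]
      show (G ᵥ* ((M z)⁻¹ * M z)) j = G j
      rw [Matrix.nonsing_inv_mul _ (isUnit_iff_ne_zero.mpr hz)]
      simp
    have hder : HasDerivAt (fun z => ∑ t, (G ᵥ* ((M z)⁻¹ * V z)) t * A t j)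
        (∑ t, u' t * A t j) z₀ :=
      HasDerivAt.fun_sum fun t _ => ((hu t).hasDerivAt).mul_const (A t j)
    have hder0 : HasDerivAt (fun z => ∑ t, (G ᵥ* ((M z)⁻¹ * V z)) t * A t j) 0 z₀ := by
      exact (hasDerivAt_const z₀ (G j)).congr_of_eventuallyEq hconst
    have := hder.unique hder0
    simpa [Matrix.vecMul, dotProduct] using this
  calc u' ᵥ* (A * (V z₀ * A)⁻¹) = (u' ᵥ* A) ᵥ* (V z₀ * A)⁻¹ := by
        rw [Matrix.vecMul_vecMul]
      _ = 0 := by rw [key, Matrix.zero_vecMul]
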